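/- Let k ≥ 2 be an integer and let x, y, z ∈ [0,1] with x + y + z = 1. Set γ = y² + 2yz and η = 1 − √(1−γ). Then y·(y+z)^k + z·y^k ≤ max(γ^{(k+1)/2}, η + (1−η)·η^k). -/

import Mathlib

open Set


lemma binom2 (n : ℕ) (u : ℝ) (hu : 0 ≤ u) :
    2 + 2*(n:ℝ)*u + (n:ℝ)*((n:ℝ)-1)*u^2 ≤ 2*(1+u)^n := by
  induction n with
  | zero => norm_num
  | succ n ih =>
    have h1 : (0:ℝ) ≤ (1+u)^n := by positivity
    have hnn : (0:ℝ) ≤ (n:ℝ)*((n:ℝ)-1) := by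
      rcases Nat.eq_zero_or_pos n with h|h
      · subst h; norm_num
      · have h1 : (1:ℝ) ≤ (n:ℝ) := by exact_mod_cast h
        nlinarith
    have hint : (0:ℝ) ≤ (n:ℝ)*((n:ℝ)-1)*u^3 := by positivity
    push_cast
    calc 2 + 2*((n:ℝ)+1)*u + ((n:ℝ)+1)*(((n:ℝ)+1)-1)*u^2
        ≤ (1+u)*(2 + 2*(n:ℝ)*u + (n:ℝ)*((n:ℝ)-1)*u^2) := by nlinarith [hint]
      _ ≤ (1+u)*(2*(1+u)^n) := by
          have := mul_le_mul_of_nonneg_left ih (by linarith : (0:ℝ) ≤ 1+u)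
          linarith
      _ = 2*(1+u)^(n+1) := by ring

lemma qprime (j : ℕ) (u : ℝ) (h0 : 0 ≤ u) (h1 : u ≤ 1) :
    2 - ((j:ℝ)+2)*u ≤ (1-u)^(j+1) * (2 + (j:ℝ)*u) := by
  induction j with
  | zero => push_cast; nlinarith [pow_one (1-u)]
  | succ j ih =>
    have h1u : (0:ℝ) ≤ 1 - u := by linarith
    have hbern : 1 - ((j:ℝ)+2)*u ≤ (1-u)^(j+2) := by
      have h := one_add_mul_le_pow (a := -u) (by linarith) (j+2)
      have e : (1:ℝ) + -u = 1 - u := by ring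
      rw [e] at h; push_cast at h; linarith
    have h2 := mul_le_mul_of_nonneg_left ih h1u
    have h3 := mul_le_mul_of_nonneg_left hbern h0
    have key : (1-u)^(j+2) * (2 + ((j:ℝ)+1)*u)
        = (1-u)*((1-u)^(j+1)*(2+(j:ℝ)*u)) + u*(1-u)^(j+2) := by ring
    push_cast
    nlinarith [h2, h3, key]




lemma caseA_core (m : ℕ) (hm : 1 ≤ m) (u : ℝ) (h0 : 0 ≤ u) (h1 : ((m:ℝ)+1)*u ≤ 1) :
    (1 + u*(1-u)^m)^2 ≤ (1-u)^m * (1+u)^(m+2) := by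
  have hm1 : (1:ℝ) ≤ (m:ℝ) := by exact_mod_cast hm
  have hu1 : u ≤ 1 := by nlinarith
  have h1u : (0:ℝ) ≤ 1 - u := by linarith
  set w := (1-u)^m with hw
  set v := (1+u)^m with hv
  have hw0 : 0 ≤ w := by positivity
  have hv0 : 0 ≤ v := by positivity
  have hD : w * v = (1-u^2)^m := by rw [hw, hv, ← mul_pow]; ring_nf
  have hDbern : 1 - (m:ℝ)*u^2 ≤ w*v := by
    rw [hD]
    have h := one_add_mul_le_pow (a := -u^2) (by nlinarith) m
    have e : (1:ℝ) + -u^2 = 1 - u^2 := by ring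
    rw [e] at h; linarith
  have hbinom : 2 + 2*(m:ℝ)*u + (m:ℝ)*((m:ℝ)-1)*u^2 ≤ 2*v := binom2 m u h0
  have hQ : 2 - ((m:ℝ)+1)*u ≤ w * (2 + ((m:ℝ)-1)*u) := by
    obtain ⟨j, rfl⟩ : ∃ j, m = j + 1 := ⟨m-1, (Nat.succ_pred_eq_of_pos hm).symm⟩
    have hq := qprime j u h0 hu1
    rw [hw]
    push_cast
    ring_nf at hq ⊢
    linarith [hq]
  have hQ1 : 1 ≤ w * (2 + ((m:ℝ)-1)*u) := by nlinarith
  -- w^2 ≤ w*v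
  have hwv : w ≤ v := pow_le_pow_left₀ h1u (by linarith) m
  have hw2 : w^2 ≤ w*v := by nlinarith
  -- key chain : 1 + 2*u*w ≤ w*v*(1+2*u)
  have hstep : 1 + 2*u*w ≤ w*v*(1+2*u) := by
    -- 2u(wv - w) = 2uw(v-1) ≥ 2uw(mu + m(m-1)u²/2) = mu² * w(2+(m-1)u) ≥ mu²
    have hv1 : (m:ℝ)*u + (m:ℝ)*((m:ℝ)-1)*u^2/2 ≤ v - 1 := by linarith
    have huw : 0 ≤ 2*u*w := by positivity
    have h5 : 2*u*w*((m:ℝ)*u + (m:ℝ)*((m:ℝ)-1)*u^2/2) ≤ 2*u*w*(v-1) :=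
      mul_le_mul_of_nonneg_left hv1 huw
    have e2 : 2*u*w*((m:ℝ)*u + (m:ℝ)*((m:ℝ)-1)*u^2/2) = (m:ℝ)*u^2*(w*(2+((m:ℝ)-1)*u)) := by ring
    have h6 : (m:ℝ)*u^2 ≤ (m:ℝ)*u^2*(w*(2+((m:ℝ)-1)*u)) := by
      nlinarith [mul_nonneg (mul_nonneg (le_trans zero_le_one hm1) (sq_nonneg u)) (sub_nonneg.2 hQ1)]
    nlinarith [h5, h6, hDbern]
  -- final assembly
  have goal2 : (1 + u*w)^2 ≤ w*v*(1+u)^2 := by nlinarith [hw2, hstep, sq_nonneg u, mul_nonneg (mul_nonneg h0 h0) (sub_nonneg.2 hw2)]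
  calc (1 + u*w)^2 ≤ w*v*(1+u)^2 := goal2
    _ = w * (1+u)^(m+2) := by rw [hv]; ring


lemma caseB_core (n : ℕ) (a b : ℝ) (ha : 0 < a) (hab : a ≤ b)
    (hb : ((n:ℝ)+2)*b ≤ (n:ℝ)+1) :
    (b + (1-b)*b^(n+2))^2 * (a*(2-a))^(n+3) ≤ (a + (1-a)*a^(n+2))^2 * (b*(2-b))^(n+3) := by
  have hb1 : b < 1 := by nlinarith [Nat.cast_nonneg (α := ℝ) n]
  set N : ℝ → ℝ := fun t => (t + t^(n+2) - t^(n+3))^2 with hN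
  set Q : ℝ → ℝ := fun t => (t*(2-t))^(n+3) with hQ
  have hQpos : ∀ t ∈ Icc a b, 0 < Q t := by
    intro t ht
    have h1 : 0 < t := lt_of_lt_of_le ha ht.1
    have h2 : t < 1 := lt_of_le_of_lt ht.2 hb1
    have : 0 < t*(2-t) := by nlinarith
    positivity
  have hder : ∀ t ∈ Ioo a b, HasDerivAt (fun s => N s / Q s)
      (((2*(t + t^(n+2) - t^(n+3))^1*(1 + ((n:ℝ)+2)*t^(n+1) - ((n:ℝ)+3)*t^(n+2))) * Q t
        - N t * (((n:ℝ)+3)*(t*(2-t))^(n+2)*(1*(2-t)+t*(-1)))) / (Q t)^2) t := by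
    intro t ht
    have hψ : HasDerivAt (fun s : ℝ => s + s^(n+2) - s^(n+3))
        (1 + ((n:ℝ)+2)*t^(n+1) - ((n:ℝ)+3)*t^(n+2)) t := by
      have h := ((hasDerivAt_id t).add (hasDerivAt_pow (n+2) t)).sub (hasDerivAt_pow (n+3) t)
      have e1 : n+2-1 = n+1 := rfl
      have e2 : n+3-1 = n+2 := rfl
      rw [e1, e2] at h
      exact h.congr_deriv (by push_cast; ring)
    have hNd : HasDerivAt N
        (2*(t + t^(n+2) - t^(n+3))^1*(1 + ((n:ℝ)+2)*t^(n+1) - ((n:ℝ)+3)*t^(n+2))) t := by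
      have h := hψ.pow 2
      exact h.congr_deriv (by push_cast; ring)
    have hq1 : HasDerivAt (fun s : ℝ => s*(2-s)) (1*(2-t)+t*(-1)) t := by
      have h := (hasDerivAt_id' t).mul (HasDerivAt.const_sub 2 (hasDerivAt_id' t))
      exact h.congr_deriv (by ring)
    have hQd : HasDerivAt Q (((n:ℝ)+3)*(t*(2-t))^(n+2)*(1*(2-t)+t*(-1))) t := by
      have h := hq1.pow (n+3)
      have e2 : n+3-1 = n+2 := rfl
      rw [e2] at h
      exact h.congr_deriv (by push_cast; ring)
    exact hNd.div hQd (ne_of_gt (hQpos t (Ioo_subset_Icc_self ht)))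
  have hanti : AntitoneOn (fun s => N s / Q s) (Icc a b) := by
    apply antitoneOn_of_deriv_nonpos (convex_Icc a b)
    · apply ContinuousOn.div
      · exact (by fun_prop : Continuous N).continuousOn
      · exact (by fun_prop : Continuous Q).continuousOn
      · exact fun t ht => ne_of_gt (hQpos t ht)
    · rw [interior_Icc]
      exact fun t ht => ((hder t ht).differentiableAt).differentiableWithinAt
    · rw [interior_Icc]
      intro t ht
      rw [(hder t ht).deriv]
      apply div_nonpos_of_nonpos_of_nonneg _ (sq_nonneg _)
      have h1 : 0 < t := lt_of_lt_of_le ha ht.1.le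
      have h2 : t < 1 := lt_trans ht.2 hb1
      have key : (2*(t + t^(n+2) - t^(n+3))^1*(1 + ((n:ℝ)+2)*t^(n+1) - ((n:ℝ)+3)*t^(n+2))) * Q t
          - N t * (((n:ℝ)+3)*(t*(2-t))^(n+2)*(1*(2-t)+t*(-1)))
          = -((t*(2-t))^(n+2) * (2*(t + t^(n+2) - t^(n+3)))
              * (t*(1-t^(n+1))*(((n:ℝ)+1)-((n:ℝ)+2)*t))) := by
        rw [hN, hQ]; ring
      rw [key, neg_nonpos]
      have hψ0 : 0 ≤ t + t^(n+2) - t^(n+3) := by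
        have : t^(n+3) = t^(n+2)*t := by ring
        nlinarith [pow_nonneg h1.le (n+2)]
      have hpow1 : t^(n+1) ≤ 1 := pow_le_one₀ h1.le h2.le
      have hlin : 0 ≤ ((n:ℝ)+1)-((n:ℝ)+2)*t := by nlinarith [ht.2.le]
      have hmul : 0 < t*(2-t) := by nlinarith
      exact mul_nonneg (mul_nonneg (pow_nonneg hmul.le _) (by linarith))
        (mul_nonneg (mul_nonneg h1.le (by linarith)) hlin)
  have hF := hanti (left_mem_Icc.2 hab) (right_mem_Icc.2 hab) hab
  have hQa := hQpos a (left_mem_Icc.2 hab)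
  have hQb := hQpos b (right_mem_Icc.2 hab)
  rw [div_le_div_iff₀ hQb hQa] at hF
  calc (b + (1-b)*b^(n+2))^2 * (a*(2-a))^(n+3) = N b * Q a := by rw [hN, hQ]; ring
    _ ≤ N a * Q b := hF
    _ = (a + (1-a)*a^(n+2))^2 * (b*(2-b))^(n+3) := by rw [hN, hQ]; ring




set_option maxHeartbeats 1000000 in
theorem stmt_19 (k : ℕ) (hk : 2 ≤ k) (x y z : ℝ)
    (hx : x ∈ Set.Icc (0 : ℝ) 1) (hy : y ∈ Set.Icc (0 : ℝ) 1) (hz : z ∈ Set.Icc (0 : ℝ) 1)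
    (hsum : x + y + z = 1) (γ η : ℝ) (hγ : γ = y ^ 2 + 2 * y * z)
    (hη : η = 1 - Real.sqrt (1 - γ)) :
    y * (y + z) ^ k + z * y ^ k
      ≤ max (γ ^ (((k : ℝ) + 1) / 2)) (η + (1 - η) * η ^ k) := by
  obtain ⟨n, rfl⟩ : ∃ n, k = n + 2 := ⟨k - 2, by omega⟩
  obtain ⟨hx0, hx1⟩ := hx
  obtain ⟨hy0, hy1⟩ := hy
  obtain ⟨hz0, hz1⟩ := hz
  have hγ0 : 0 ≤ γ := by nlinarith
  have hγ1 : γ ≤ 1 := by nlinarith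
  have hsq0 : 0 ≤ Real.sqrt (1-γ) := Real.sqrt_nonneg _
  have hsq1 : Real.sqrt (1-γ) ≤ 1 := Real.sqrt_le_one.2 (by linarith)
  have hη0 : 0 ≤ η := by rw [hη]; linarith
  have hη1 : η ≤ 1 := by rw [hη]; linarith
  rcases eq_or_lt_of_le hy0 with hy0' | hypos
  · -- y = 0 case
    rw [← hy0']
    have hz' : z * (0:ℝ)^(n+2) = 0 := by
      rw [zero_pow (by omega : n+2 ≠ 0)]; ring
    rw [hz']
    simp only [zero_mul, zero_add]
    exact le_trans (Real.rpow_nonneg hγ0 _) (le_max_left _ _)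
  · -- y > 0
    obtain ⟨s, hsdef⟩ : ∃ s : ℝ, s = y + z := ⟨y+z, rfl⟩
    have hspos : 0 < s := by rw [hsdef]; linarith
    have hs1 : s ≤ 1 := by rw [hsdef]; linarith
    obtain ⟨c, hcdef⟩ : ∃ c : ℝ, c = y / s := ⟨y/s, rfl⟩
    have hcs : y = s * c := by rw [hcdef]; field_simp
    have hzc : z = s * (1 - c) := by
      rw [hcdef]; field_simp; rw [hsdef]; ring
    have hc0 : 0 < c := by rw [hcdef]; exact div_pos hypos hspos
    have hc1 : c ≤ 1 := by
      rw [hcdef, div_le_one hspos, hsdef]; linarith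
    have hγs : γ = s^2 * (c*(2-c)) := by rw [hγ, hcs, hzc]; ring
    have hγpos : 0 < γ := by nlinarith
    have hfe : y * (y+z)^(n+2) + z * y^(n+2)
        = s^(n+3) * (c + (1-c)*c^(n+2)) := by
      rw [← hsdef, hcs, hzc]; ring
    have hf0 : 0 ≤ y * (y+z)^(n+2) + z * y^(n+2) := by positivity
    by_cases hcase : ((n:ℝ)+2) * z ≤ s
    · -- Case A : small z, clique branch
      have hu1 : ((n:ℝ)+1+1)*(1-c) ≤ 1 := by
        have h := (mul_le_mul_iff_right₀ hspos).1
          (by nlinarith [hcase] : s*((((n:ℝ))+1+1)*(1-c)) ≤ s*1)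
        linarith
      have hA := caseA_core (n+1) (by omega) (1-c) (by linarith) (by push_cast; linarith [hu1])
      have e1 : (1:ℝ) - (1-c) = c := by ring
      have e2 : (1:ℝ) + (1-c) = 2-c := by ring
      rw [e1, e2] at hA
      have hA2 : (c + (1-c)*c^(n+2))^2 ≤ c^(n+3) * (2-c)^(n+3) := by
        have h := mul_le_mul_of_nonneg_left hA (sq_nonneg c)
        calc (c + (1-c)*c^(n+2))^2 = c^2 * (1 + (1-c)*c^(n+1))^2 := by ring
          _ ≤ c^2 * (c^(n+1) * (2-c)^(n+1+2)) := h
          _ = c^(n+3) * (2-c)^(n+3) := by ring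
      have hfsq : (y * (y+z)^(n+2) + z * y^(n+2))^2 ≤ γ^(n+3) := by
        calc (y * (y+z)^(n+2) + z * y^(n+2))^2
            = s^(2*(n+3)) * (c + (1-c)*c^(n+2))^2 := by rw [hfe]; ring
          _ ≤ s^(2*(n+3)) * (c^(n+3) * (2-c)^(n+3)) :=
              mul_le_mul_of_nonneg_left hA2 (by positivity)
          _ = γ^(n+3) := by rw [hγs, mul_pow, mul_pow, pow_mul]
      have hB0 : 0 ≤ γ ^ ((((n+2:ℕ):ℝ) + 1) / 2) := Real.rpow_nonneg hγ0 _
      have hBsq : (γ ^ ((((n+2:ℕ):ℝ) + 1) / 2))^2 = γ^(n+3) := by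
        rw [← Real.rpow_natCast (γ ^ ((((n+2:ℕ):ℝ) + 1) / 2)) 2,
            ← Real.rpow_mul hγ0]
        have e : ((((n+2:ℕ):ℝ) + 1) / 2) * ((2:ℕ):ℝ) = ((n+3:ℕ):ℝ) := by push_cast; ring
        rw [e, Real.rpow_natCast]
      refine le_trans ?_ (le_max_left _ _)
      have hff : (y * (y+z)^(n+2) + z * y^(n+2))^2 ≤ (γ ^ ((((n+2:ℕ):ℝ) + 1) / 2))^2 := by
        rw [hBsq]; exact hfsq
      exact (pow_le_pow_iff_left₀ hf0 hB0 two_ne_zero).1 hff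
    · -- Case B : large z, anticlique branch
      push_neg at hcase
      have hμη : η * (2-η) = γ := by
        have hh : Real.sqrt (1-γ) ^ 2 = 1-γ := Real.sq_sqrt (by linarith)
        rw [hη]; linear_combination -hh
      have hηpos : 0 < η := by
        rw [hη]
        have : Real.sqrt (1-γ) < 1 := by
          nlinarith [Real.sq_sqrt (show (0:ℝ) ≤ 1-γ by linarith), hsq0]
        linarith
      have hμc0 : 0 ≤ c * (2-c) := by nlinarith
      have hηc : η ≤ c := by
        have h1 : η*(2-η) ≤ c*(2-c) := by
          rw [hμη, hγs]
          have hs2 : s^2 ≤ 1 := by nlinarith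
          nlinarith [mul_nonneg (sub_nonneg.2 hs2) hμc0]
        by_contra hcon
        push_neg at hcon
        nlinarith [hcon, hη1, hc1]
      have hck : ((n:ℝ)+2)*c ≤ (n:ℝ)+1 := by
        have h := (mul_lt_mul_iff_right₀ hspos).1
          (by nlinarith [hcase] : s*(1:ℝ) < s*((((n:ℝ))+2)*(1-c)))
        linarith
      have hB := caseB_core n η c hηpos hηc hck
      have hμcpos : 0 < (c*(2-c))^(n+3) := by
        have h2c : 0 < 2 - c := by linarith
        positivity
      have hψη0 : 0 ≤ η + (1-η)*η^(n+2) := by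
        have : 0 ≤ η^(n+2) := by positivity
        nlinarith
      have hkey : (y * (y+z)^(n+2) + z * y^(n+2))^2 * (c*(2-c))^(n+3)
          = (c + (1-c)*c^(n+2))^2 * (η*(2-η))^(n+3) := by
        rw [hμη, hγs, hfe]
        simp only [mul_pow, ← pow_mul]
        ring
      have hfsq : (y * (y+z)^(n+2) + z * y^(n+2))^2 ≤ (η + (1-η)*η^(n+2))^2 := by
        have h2 : (y * (y+z)^(n+2) + z * y^(n+2))^2 * (c*(2-c))^(n+3)
            ≤ (η + (1-η)*η^(n+2))^2 * (c*(2-c))^(n+3) := by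
          rw [hkey]; exact hB
        exact le_of_mul_le_mul_right h2 hμcpos
      refine le_trans ?_ (le_max_right _ _)
      exact (pow_le_pow_iff_left₀ hf0 hψη0 two_ne_zero).1 hfsq
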